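/- Let φ(u) := (e^{-u}(-2+4u-u²) + e^{-2u}(4-4u-u²) - 2e^{-3u})/(1-e^{-u})³ for u > 0. Then for every real α > 0, the function u ↦ u^α φ(u) is integrable on (0,∞) and ∫₀^∞ u^α φ(u) du = α(1-α) Γ(α+1) ζ(α+1), where Γ is the Gamma function and ζ(s) = ∑_{n=1}^{∞} n^{-s} is the Riemann zeta function. -/

import Mathlib

open MeasureTheory

/-- The radial profile `φ` of the truncated pair correlation. -/
noncomputable def phi (u : ℝ) : ℝ :=
  (Real.exp (-u) * (-2 + 4*u - u^2) + Real.exp (-2*u) * (4 - 4*u - u^2)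
    - 2 * Real.exp (-3*u)) / (1 - Real.exp (-u))^3

namespace Stmt3Aux

open Real Set

/-- The `n`-th term of the series expansion of `phi`. -/
noncomputable def pterm (n : ℕ) (u : ℝ) : ℝ :=
  (-(((n:ℝ)+1)^2*u^2) + 4*((n:ℝ)+1)*u - 2) * Real.exp (-(((n:ℝ)+1)*u))

lemma exp_pow (u : ℝ) (k : ℕ) : Real.exp (-u) ^ k = Real.exp (-((k:ℝ)*u)) := by
  rw [← Real.exp_nat_mul]; ring_nf

lemma hasSum_phi {u : ℝ} (hu : 0 < u) : HasSum (fun n => pterm n u) (phi u) := by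
  set x := Real.exp (-u) with hxdef
  have hx0 : 0 < x := Real.exp_pos _
  have hx1 : x < 1 := Real.exp_lt_one_iff.mpr (by linarith)
  have hxn : ‖x‖ < 1 := by rw [Real.norm_eq_abs, abs_of_pos hx0]; exact hx1
  have h2 : HasSum (fun n : ℕ => (((n+2).choose 2 : ℕ) : ℝ) * x ^ n) (1/(1-x)^3) :=
    hasSum_choose_mul_geometric_of_norm_lt_one 2 hxn
  set A : ℝ := -2 + 4*u - u^2 with hA
  set B : ℝ := 4 - 4*u - u^2 with hB
  -- P series
  have hP : HasSum (fun n : ℕ => (A*x) * ((((n+2).choose 2 : ℕ) : ℝ) * x ^ n))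
      (A*x*(1/(1-x)^3)) := h2.mul_left _
  -- Q series (shifted by 1)
  set Q : ℕ → ℝ := fun n => match n with
    | 0 => 0
    | Nat.succ k => (B*x^2) * ((((k+2).choose 2 : ℕ) : ℝ) * x ^ k) with hQdef
  have hQ' : HasSum (fun n : ℕ => Q (n+1)) (B*x^2*(1/(1-x)^3)) := h2.mul_left _
  have hQ : HasSum Q (B*x^2*(1/(1-x)^3)) := by
    have := (hasSum_nat_add_iff (f := Q) 1).mp hQ'
    simpa [hQdef] using this
  -- R series (shifted by 2)
  set R : ℕ → ℝ := fun n => match n with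
    | 0 => 0
    | 1 => 0
    | Nat.succ (Nat.succ k) => (-2*x^3) * ((((k+2).choose 2 : ℕ) : ℝ) * x ^ k) with hRdef
  have hR' : HasSum (fun n : ℕ => R (n+2)) (-2*x^3*(1/(1-x)^3)) := h2.mul_left _
  have hR : HasSum R (-2*x^3*(1/(1-x)^3)) := by
    have := (hasSum_nat_add_iff (f := R) 2).mp hR'
    simpa [hRdef, Finset.sum_range_succ] using this
  have htot := (hP.add hQ).add hR
  have hxe : ∀ k : ℕ, Real.exp (-(((k:ℝ)+1)*u)) = x^(k+1) := by
    intro k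
    rw [hxdef, exp_pow]
    congr 1
    push_cast
    ring
  have hfun : ∀ n : ℕ, ((A*x) * ((((n+2).choose 2 : ℕ) : ℝ) * x ^ n) + Q n) + R n
      = pterm n u := by
    have hchoose : ∀ k : ℕ, (((k+2).choose 2 : ℕ) : ℝ) = ((k:ℝ)+1)*((k:ℝ)+2)/2 := by
      intro k
      rw [Nat.cast_choose_two]
      push_cast
      ring
    intro n
    match n with
    | 0 =>
      have e1 : Q 0 = 0 := rfl
      have e2 : R 0 = 0 := rfl
      rw [e1, e2, pterm, hxe 0, hchoose 0, hA]
      push_cast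
      ring
    | 1 =>
      have e1 : Q 1 = (B*x^2) * ((((0+2).choose 2 : ℕ) : ℝ) * x ^ 0) := rfl
      have e2 : R 1 = 0 := rfl
      rw [e1, e2, pterm, hxe 1, hchoose 1, hchoose 0, hA, hB]
      push_cast
      ring
    | (k+2) =>
      have e1 : Q (k+2) = (B*x^2) * ((((k+1+2).choose 2 : ℕ) : ℝ) * x ^ (k+1)) := rfl
      have e2 : R (k+2) = (-2*x^3) * ((((k+2).choose 2 : ℕ) : ℝ) * x ^ k) := rfl
      rw [e1, e2, pterm, hxe (k+2), hchoose (k+2), hchoose (k+1), hchoose k, hA, hB]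
      push_cast
      ring
  have hval : A*x*(1/(1-x)^3) + B*x^2*(1/(1-x)^3) + -2*x^3*(1/(1-x)^3) = phi u := by
    have hxne : (1-x)^3 ≠ 0 := by
      have : 1 - x ≠ 0 := by linarith
      positivity
    rw [phi]
    rw [show Real.exp (-2*u) = x^2 by rw [hxdef, exp_pow]; congr 1; push_cast; ring]
    rw [show Real.exp (-3*u) = x^3 by rw [hxdef, exp_pow]; congr 1; push_cast; ring]
    rw [← hxdef, hA, hB]
    field_simp
    ring
  have := htot
  rw [hval] at this
  convert this using 1
  funext n
  rw [← hfun n]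

/-- Term including the `u^α` weight. -/
noncomputable def cterm (α : ℝ) (n : ℕ) (u : ℝ) : ℝ := u ^ α * pterm n u

lemma integrable_base {s b : ℝ} (hs : -1 < s) (hb : 0 < b) :
    IntegrableOn (fun u : ℝ => u ^ s * Real.exp (-(b*u))) (Set.Ioi 0) := by
  simpa [Real.rpow_one, neg_mul] using integrableOn_rpow_mul_exp_neg_mul_rpow (p := 1) hs zero_lt_one hb

lemma cterm_eq (α : ℝ) (n : ℕ) {u : ℝ} (hu : 0 < u) :
    cterm α n u = (-(((n:ℝ)+1)^2)) * (u^(α+2) * Real.exp (-((((n:ℝ)+1))*u)))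
      + (4*((n:ℝ)+1)) * (u^(α+1) * Real.exp (-((((n:ℝ)+1))*u)))
      + (-2) * (u^α * Real.exp (-((((n:ℝ)+1))*u))) := by
  have h2 : u^(α+2) = u^α * u^2 := by
    rw [Real.rpow_add hu, show (2:ℝ) = ((2:ℕ):ℝ) by norm_num, Real.rpow_natCast]
  have h1 : u^(α+1) = u^α * u := by
    rw [Real.rpow_add hu, Real.rpow_one]
  rw [cterm, pterm, h2, h1]
  ring

lemma integrable_decomp (α : ℝ) (hα : 0 < α) {m : ℝ} (hm : 0 < m) (c1 c2 c3 : ℝ) :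
    IntegrableOn (fun u : ℝ => c1 * (u^(α+2) * Real.exp (-(m*u)))
      + c2 * (u^(α+1) * Real.exp (-(m*u))) + c3 * (u^α * Real.exp (-(m*u)))) (Set.Ioi 0) := by
  have i2 := (integrable_base (by linarith : (-1:ℝ) < α+2) hm).const_mul c1
  have i1 := (integrable_base (by linarith : (-1:ℝ) < α+1) hm).const_mul c2
  have i0 := (integrable_base (by linarith : (-1:ℝ) < α) hm).const_mul c3
  exact (i2.add i1).add i0

lemma integrable_cterm (α : ℝ) (hα : 0 < α) (n : ℕ) :
    IntegrableOn (cterm α n) (Set.Ioi 0) := by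
  have hm : (0:ℝ) < (n:ℝ)+1 := by positivity
  exact (integrable_decomp α hα hm (-(((n:ℝ)+1)^2)) (4*((n:ℝ)+1)) (-2)).congr_fun
    (fun u hu => (cterm_eq α n hu).symm) measurableSet_Ioi

lemma integral_decomp (α : ℝ) (hα : 0 < α) {m : ℝ} (hm : 0 < m) (c1 c2 c3 : ℝ) :
    ∫ u in Set.Ioi (0:ℝ), (c1 * (u^(α+2) * Real.exp (-(m*u)))
        + c2 * (u^(α+1) * Real.exp (-(m*u))) + c3 * (u^α * Real.exp (-(m*u))))
      = m^(-(α+1)) * (c1/m^2 * Real.Gamma (α+3) + c2/m * Real.Gamma (α+2)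
          + c3 * Real.Gamma (α+1)) := by
  have i2 := (integrable_base (by linarith : (-1:ℝ) < α+2) hm).const_mul c1
  have i1 := (integrable_base (by linarith : (-1:ℝ) < α+1) hm).const_mul c2
  have i0 := (integrable_base (by linarith : (-1:ℝ) < α) hm).const_mul c3
  have i12 : Integrable (fun u : ℝ => c1 * (u^(α+2) * Real.exp (-(m*u)))
      + c2 * (u^(α+1) * Real.exp (-(m*u)))) (volume.restrict (Set.Ioi 0)) := by
    exact i2.add i1
  rw [integral_add i12 i0, integral_add i2 i1, integral_const_mul, integral_const_mul,
    integral_const_mul]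
  have E3 := Real.integral_rpow_mul_exp_neg_mul_Ioi (by linarith : (0:ℝ) < α+3) hm
  have E2 := Real.integral_rpow_mul_exp_neg_mul_Ioi (by linarith : (0:ℝ) < α+2) hm
  have E1 := Real.integral_rpow_mul_exp_neg_mul_Ioi (by linarith : (0:ℝ) < α+1) hm
  rw [show α+3-1 = α+2 by ring] at E3
  rw [show α+2-1 = α+1 by ring] at E2
  rw [show α+1-1 = α by ring] at E1
  rw [E3, E2, E1]
  have hm1 : (0:ℝ) < 1/m := by positivity
  have p3 : (1/m)^(α+3) = (1/m)^(α+1) * (1/m)^(2:ℕ) := by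
    rw [← Real.rpow_natCast (1/m) 2, ← Real.rpow_add hm1]
    congr 1
    push_cast
    ring
  have p2 : (1/m)^(α+2) = (1/m)^(α+1) * (1/m) := by
    rw [show α+2 = (α+1)+1 by ring, Real.rpow_add hm1, Real.rpow_one]
  have p1 : (1/m)^(α+1) = m^(-(α+1)) := by
    rw [one_div, Real.inv_rpow hm.le, ← Real.rpow_neg hm.le]
  rw [p3, p2, p1]
  have hmne : m ≠ 0 := hm.ne'
  field_simp

lemma integral_cterm (α : ℝ) (hα : 0 < α) (n : ℕ) :
    ∫ u in Set.Ioi (0:ℝ), cterm α n u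
      = ((n:ℝ)+1)^(-(α+1)) * (α * (1-α) * Real.Gamma (α+1)) := by
  have hm : (0:ℝ) < (n:ℝ)+1 := by positivity
  rw [setIntegral_congr_fun measurableSet_Ioi (fun u hu => cterm_eq α n hu),
    integral_decomp α hα hm _ _ _]
  have g2 : Real.Gamma (α+2) = (α+1) * Real.Gamma (α+1) := by
    rw [show α+2 = (α+1)+1 by ring, Real.Gamma_add_one (by linarith)]
  have g3 : Real.Gamma (α+3) = (α+2) * ((α+1) * Real.Gamma (α+1)) := by
    rw [show α+3 = (α+2)+1 by ring, Real.Gamma_add_one (by linarith), g2]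
  have hmne : ((n:ℝ)+1) ≠ 0 := hm.ne'
  rw [g3, g2, neg_div, div_self (pow_ne_zero 2 hmne), mul_div_assoc, div_self hmne]
  ring

lemma norm_cterm_le (α : ℝ) (hα : 0 < α) (n : ℕ) {u : ℝ} (hu : 0 < u) :
    ‖cterm α n u‖ ≤ (((n:ℝ)+1)^2) * (u^(α+2) * Real.exp (-((((n:ℝ)+1))*u)))
      + (4*((n:ℝ)+1)) * (u^(α+1) * Real.exp (-((((n:ℝ)+1))*u)))
      + 2 * (u^α * Real.exp (-((((n:ℝ)+1))*u))) := by
  set m : ℝ := (n:ℝ)+1 with hmdef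
  have hm : (0:ℝ) < m := by positivity
  have h2 : u^(α+2) = u^α * u^2 := by
    rw [Real.rpow_add hu, show (2:ℝ) = ((2:ℕ):ℝ) by norm_num, Real.rpow_natCast]
  have h1 : u^(α+1) = u^α * u := by
    rw [Real.rpow_add hu, Real.rpow_one]
  have hue : (0:ℝ) < Real.exp (-(m*u)) := Real.exp_pos _
  have hua : (0:ℝ) ≤ u^α := Real.rpow_nonneg hu.le _
  rw [cterm, pterm, norm_mul, norm_mul, Real.norm_eq_abs, Real.norm_eq_abs, Real.norm_eq_abs,
    abs_of_nonneg hua, abs_of_pos hue, h2, h1, ← hmdef]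
  have habs : |(-(m^2*u^2) + 4*m*u - 2)| ≤ m^2*u^2 + 4*m*u + 2 := by
    rw [abs_le]
    constructor
    · nlinarith [mul_pos hm hu, sq_nonneg (m*u)]
    · nlinarith [mul_pos hm hu, sq_nonneg (m*u)]
  have := mul_le_mul_of_nonneg_right (mul_le_mul_of_nonneg_left habs hua) hue.le
  calc u^α * (|(-(m^2*u^2) + 4*m*u - 2)| * Real.exp (-(m*u)))
      = u^α * |(-(m^2*u^2) + 4*m*u - 2)| * Real.exp (-(m*u)) := by ring
    _ ≤ u^α * (m^2*u^2 + 4*m*u + 2) * Real.exp (-(m*u)) := this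
    _ = m^2 * (u^α * u^2 * Real.exp (-(m*u))) + 4*m * (u^α * u * Real.exp (-(m*u)))
        + 2 * (u^α * Real.exp (-(m*u))) := by ring

lemma integral_norm_cterm_le (α : ℝ) (hα : 0 < α) (n : ℕ) :
    ∫ u in Set.Ioi (0:ℝ), ‖cterm α n u‖
      ≤ ((n:ℝ)+1)^(-(α+1)) * (Real.Gamma (α+3) + 4 * Real.Gamma (α+2)
          + 2 * Real.Gamma (α+1)) := by
  have hm : (0:ℝ) < (n:ℝ)+1 := by positivity
  have hg := integrable_decomp α hα hm (((n:ℝ)+1)^2) (4*((n:ℝ)+1)) 2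
  have hle := setIntegral_mono_on (integrable_cterm α hα n).norm hg measurableSet_Ioi
    (fun u hu => norm_cterm_le α hα n hu)
  refine hle.trans (le_of_eq ?_)
  rw [integral_decomp α hα hm _ _ _]
  have hmne : ((n:ℝ)+1) ≠ 0 := hm.ne'
  field_simp

lemma summable_integral_norm (α : ℝ) (hα : 0 < α) :
    Summable (fun n : ℕ => ∫ u in Set.Ioi (0:ℝ), ‖cterm α n u‖) := by
  have hbase : Summable (fun n : ℕ => ((n:ℝ)+1) ^ (-(α+1))) := by
    have h : Summable (fun n : ℕ => ((n:ℝ)) ^ (-(α+1))) :=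
      Real.summable_nat_rpow.mpr (by linarith)
    have := (summable_nat_add_iff 1).mpr h
    simpa using this
  refine Summable.of_nonneg_of_le (fun n => integral_nonneg fun u => norm_nonneg _)
    (fun n => integral_norm_cterm_le α hα n) (hbase.mul_right _)

lemma enorm_tsum_le (f : ℕ → ℝ) : (‖∑' n, f n‖₊ : ENNReal) ≤ ∑' n, (‖f n‖₊ : ENNReal) := by
  by_cases h : Summable fun n => ‖f n‖₊
  · rw [← ENNReal.coe_tsum h]
    exact ENNReal.coe_le_coe.2 (nnnorm_tsum_le h)
  · have : ∑' n, (‖f n‖₊ : ENNReal) = ⊤ := by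
      by_contra h'
      exact h (ENNReal.tsum_coe_ne_top_iff_summable.mp h')
    rw [this]
    exact le_top

end Stmt3Aux

open Stmt3Aux in
/-- For every `α > 0`, `u ↦ u^α φ(u)` is integrable on `(0,∞)` and
`∫₀^∞ u^α φ(u) du = α (1-α) Γ(α+1) ζ(α+1)`, where
`ζ(α+1) = ∑_{n=1}^∞ n^{-(α+1)}`. -/
theorem stmt_3 (α : ℝ) (hα : 0 < α) :
    IntegrableOn (fun u : ℝ => u ^ α * phi u) (Set.Ioi 0) ∧
    ∫ u in Set.Ioi (0:ℝ), u ^ α * phi u =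
      α * (1 - α) * Real.Gamma (α + 1) * ∑' n : ℕ, ((n:ℝ)+1) ^ (-(α + 1)) := by
  have hInt : ∀ n : ℕ, Integrable (cterm α n) (volume.restrict (Set.Ioi 0)) :=
    fun n => integrable_cterm α hα n
  have hSumm := summable_integral_norm α hα
  have hpt : ∀ u ∈ Set.Ioi (0:ℝ), (∑' n, cterm α n u) = u^α * phi u := by
    intro u hu
    exact ((hasSum_phi hu).mul_left (u^α)).tsum_eq
  constructor
  · refine ⟨?_, ?_⟩
    · apply Measurable.aestronglyMeasurable
      unfold phi
      fun_prop
    · rw [hasFiniteIntegral_def]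
      have step1 : ∫⁻ u in Set.Ioi (0:ℝ), ‖u ^ α * phi u‖₊
          ≤ ∑' n, ∫⁻ u in Set.Ioi (0:ℝ), ‖cterm α n u‖₊ := by
        rw [← lintegral_tsum (f := fun n u => (‖cterm α n u‖₊ : ENNReal))
          (fun n => (hInt n).aestronglyMeasurable.enorm)]
        apply lintegral_mono_ae
        filter_upwards [ae_restrict_mem measurableSet_Ioi] with u hu
        rw [← hpt u hu]
        exact enorm_tsum_le _
      refine lt_of_le_of_lt step1 ?_
      have step2 : ∀ n : ℕ, ∫⁻ u in Set.Ioi (0:ℝ), ‖cterm α n u‖₊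
          = ENNReal.ofReal (∫ u in Set.Ioi (0:ℝ), ‖cterm α n u‖) :=
        fun n => (ofReal_integral_norm_eq_lintegral_enorm (hInt n)).symm
      simp_rw [step2]
      rw [← ENNReal.ofReal_tsum_of_nonneg (fun n => integral_nonneg fun u => norm_nonneg _)
        hSumm]
      exact ENNReal.ofReal_lt_top
  · have hHS := hasSum_integral_of_summable_integral_norm hInt hSumm
    calc ∫ u in Set.Ioi (0:ℝ), u ^ α * phi u
        = ∫ u in Set.Ioi (0:ℝ), ∑' n, cterm α n u :=
          (setIntegral_congr_fun measurableSet_Ioi (fun u hu => (hpt u hu).symm))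
      _ = ∑' n, ∫ u in Set.Ioi (0:ℝ), cterm α n u := hHS.tsum_eq.symm
      _ = ∑' n : ℕ, ((n:ℝ)+1)^(-(α+1)) * (α * (1-α) * Real.Gamma (α+1)) := by
          exact tsum_congr fun n => integral_cterm α hα n
      _ = α * (1 - α) * Real.Gamma (α + 1) * ∑' n : ℕ, ((n:ℝ)+1) ^ (-(α + 1)) := by
          rw [tsum_mul_right, mul_comm]
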